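/- For every p with 0 < p < 1 and all positive integers n, d such that d is even and d/2 divides n, there exists a d-dependent random graph distribution G(n,p,d) such that the probability that the sampled graph contains a clique on more than (d·√p)/2 − √(d·√p) vertices is at least 1 − e^{−2n/d}. -/

import Mathlib

/-- A `d`-dependent random graph distribution `G(n, p, d)`: a probability space with
Boolean random variables `X e`, one for each unordered pair `e` of distinct vertices of
`Fin n`, each equal to `true` with probability `p`, such that each `X e` is independent of
the joint family of all variables at pairs outside a set `N e` of at most `d` other pairs. -/
structure DepGraph (n : ℕ) (p : ℝ) (d : ℕ) where
  Ω : Type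
  [mΩ : MeasurableSpace Ω]
  μ : MeasureTheory.Measure Ω
  [probμ : MeasureTheory.IsProbabilityMeasure μ]
  X : Sym2 (Fin n) → Ω → Bool
  meas : ∀ e, Measurable (X e)
  edgeProb : ∀ e : Sym2 (Fin n), ¬ e.IsDiag → μ {ω | X e ω = true} = ENNReal.ofReal p
  locDep : ∀ e : Sym2 (Fin n), ¬ e.IsDiag →
    ∃ N : Finset (Sym2 (Fin n)), e ∉ N ∧ N.card ≤ d ∧
      ProbabilityTheory.IndepFun (X e)
        (fun ω (f : {f : Sym2 (Fin n) // ¬ f.IsDiag ∧ f ∉ N ∧ f ≠ e}) => X f.1 ω) μ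

attribute [instance] DepGraph.mΩ DepGraph.probμ

open MeasureTheory ProbabilityTheory

/-- The random simple graph sampled from a `d`-dependent random graph distribution:
`i` and `j` are adjacent iff `i ≠ j` and `X {i,j} = true`. -/
def DepGraph.graph {n : ℕ} {p : ℝ} {d : ℕ} (G : DepGraph n p d) (ω : G.Ω) :
    SimpleGraph (Fin n) where
  Adj i j := i ≠ j ∧ G.X s(i, j) ω = true
  symm := by
    constructor
    intro i j h
    refine ⟨h.1.symm, ?_⟩
    rw [Sym2.eq_swap]
    exact h.2
  loopless := ⟨fun i h => h.1 rfl⟩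

/-- A set `s` of vertices is uncorrelated if the edge variables at any two distinct pairs
of vertices of `s` are independent. -/
def DepGraph.Uncorrelated {n : ℕ} {p : ℝ} {d : ℕ} (G : DepGraph n p d)
    (s : Finset (Fin n)) : Prop :=
  ∀ e e' : Sym2 (Fin n), ¬ e.IsDiag → ¬ e'.IsDiag → e ≠ e' →
    (∀ v ∈ e, v ∈ s) → (∀ v ∈ e', v ∈ s) →
    IndepFun (G.X e) (G.X e') G.μ






namespace LCC

/-- Bernoulli measure on `Bool`. -/
noncomputable def bern (a : ℝ) : Measure Bool :=
  (ENNReal.ofReal a) • Measure.dirac true + (ENNReal.ofReal (1 - a)) • Measure.dirac false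

lemma bern_true (a : ℝ) : bern a {true} = ENNReal.ofReal a := by
  simp [bern, Measure.dirac_apply' _ (by trivial : MeasurableSet ({true} : Set Bool))]

lemma bern_prob {a : ℝ} (h0 : 0 ≤ a) (h1 : a ≤ 1) : IsProbabilityMeasure (bern a) := by
  constructor
  simp only [bern, Measure.add_apply, Measure.smul_apply, smul_eq_mul,
    measure_univ, mul_one]
  rw [← ENNReal.ofReal_add h0 (by linarith), add_sub_cancel, ENNReal.ofReal_one]

section PiBool

variable {ι : Type} [Fintype ι] [DecidableEq ι] (ν : ι → Measure Bool)
  [∀ i, IsProbabilityMeasure (ν i)]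

lemma pi_forall_true (s : Finset ι) :
    Measure.pi ν {ω | ∀ i ∈ s, ω i = true} = ∏ i ∈ s, ν i {true} := by
  have h1 : {ω : ι → Bool | ∀ i ∈ s, ω i = true}
      = Set.pi Set.univ (fun i => if i ∈ s then {true} else Set.univ) := by
    ext ω
    simp only [Set.mem_setOf_eq, Set.mem_pi, Set.mem_univ, true_implies]
    constructor
    · intro h i
      by_cases hi : i ∈ s <;> simp [hi, h i]
    · intro h i hi
      have := h i
      simpa [hi] using this
  rw [h1, Measure.pi_pi]
  calc ∏ i : ι, ν i (if i ∈ s then {true} else Set.univ)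
      = ∏ i : ι, (if i ∈ s then ν i {true} else 1) :=
        Finset.prod_congr rfl fun i _ => by
          by_cases hi : i ∈ s
          · rw [if_pos hi, if_pos hi]
          · rw [if_neg hi, if_neg hi, measure_univ]
    _ = ∏ i ∈ s, ν i {true} := by
        rw [Finset.prod_ite_mem Finset.univ s (fun i => ν i ({true} : Set Bool)),
          Finset.univ_inter]

lemma iIndep_eval :
    iIndepFun (fun (i : ι) (ω : ι → Bool) => ω i)
      (Measure.pi ν) := by
  rw [iIndepFun_iff_measure_inter_preimage_eq_mul]
  intro S sets _
  have key : ∀ (T : Finset ι) (f : ι → Set Bool),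
      Measure.pi ν (⋂ i ∈ T, (fun ω : ι → Bool => ω i) ⁻¹' f i)
        = ∏ i ∈ T, ν i (f i) := by
    intro T f
    have h1 : (⋂ i ∈ T, (fun ω : ι → Bool => ω i) ⁻¹' f i)
        = Set.pi Set.univ (fun i => if i ∈ T then f i else Set.univ) := by
      ext ω
      simp only [Set.mem_iInter, Set.mem_preimage, Set.mem_pi, Set.mem_univ, true_implies]
      constructor
      · intro h i
        by_cases hi : i ∈ T <;> simp [hi, h i]
      · intro h i hi
        have := h i
        simpa [hi] using this
    rw [h1, Measure.pi_pi]
    calc ∏ i : ι, ν i (if i ∈ T then f i else Set.univ)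
        = ∏ i : ι, (if i ∈ T then ν i (f i) else 1) :=
          Finset.prod_congr rfl fun i _ => by
            by_cases hi : i ∈ T
            · rw [if_pos hi, if_pos hi]
            · rw [if_neg hi, if_neg hi, measure_univ]
      _ = ∏ i ∈ T, ν i (f i) := by
          rw [Finset.prod_ite_mem Finset.univ T (fun i => ν i (f i)), Finset.univ_inter]
  rw [key S sets]
  refine Finset.prod_congr rfl fun i hi => ?_
  have := key {i} sets
  simpa using this.symm

lemma indep_of_determined {α β : Type*} [MeasurableSpace α] [MeasurableSpace β]
    (S T : Finset ι) (hST : Disjoint S T) (A : (ι → Bool) → α) (B : (ι → Bool) → β)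
    (hA : ∀ ω ω', (∀ i ∈ S, ω i = ω' i) → A ω = A ω')
    (hB : ∀ ω ω', (∀ i ∈ T, ω i = ω' i) → B ω = B ω') :
    IndepFun A B (Measure.pi ν) := by
  classical
  set A' : ({i // i ∈ S} → Bool) → α :=
    fun σ => A (fun i => if h : i ∈ S then σ ⟨i, h⟩ else false) with hA'
  set B' : ({i // i ∈ T} → Bool) → β :=
    fun σ => B (fun i => if h : i ∈ T then σ ⟨i, h⟩ else false) with hB'
  have hAe : A = A' ∘ (fun (ω : ι → Bool) (i : {i // i ∈ S}) => ω i.1) := by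
    funext ω
    exact (hA _ _ (fun i hi => by simp [hi])).symm
  have hBe : B = B' ∘ (fun (ω : ι → Bool) (i : {i // i ∈ T}) => ω i.1) := by
    funext ω
    exact (hB _ _ (fun i hi => by simp [hi])).symm
  rw [hAe, hBe]
  exact ((iIndep_eval ν).indepFun_finset S T hST (fun i => Measurable.of_discrete)).comp
    Measurable.of_discrete Measurable.of_discrete

end PiBool


section Constr

variable {n k : ℕ}

/-- Two endpoints in the same block of size `k`. -/
def blkEq (k : ℕ) (e : Sym2 (Fin n)) : Prop := ∀ u ∈ e, ∀ v ∈ e, u.1 / k = v.1 / k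

instance : DecidablePred (blkEq (n := n) k) := fun e => by
  unfold blkEq; infer_instance

lemma blkEq_mk {a b : Fin n} : blkEq k s(a, b) ↔ a.1 / k = b.1 / k := by
  constructor
  · intro h; exact h a (by simp) b (by simp)
  · intro h u hu v hv
    rw [Sym2.mem_iff] at hu hv
    rcases hu with rfl | rfl <;> rcases hv with rfl | rfl <;> omega

/-- The edge random variables. -/
def XX (k : ℕ) (e : Sym2 (Fin n)) (ω : (Fin n ⊕ Sym2 (Fin n)) → Bool) : Bool :=
  if blkEq k e then decide (∀ v ∈ e, ω (Sum.inl v) = true) else ω (Sum.inr e)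

lemma XX_det (e : Sym2 (Fin n)) (ω ω' : (Fin n ⊕ Sym2 (Fin n)) → Bool)
    (h1 : blkEq k e → ∀ v ∈ e, ω (Sum.inl v) = ω' (Sum.inl v))
    (h2 : ¬ blkEq k e → ω (Sum.inr e) = ω' (Sum.inr e)) :
    XX k e ω = XX k e ω' := by
  unfold XX
  split_ifs with h
  · refine decide_eq_decide.mpr ?_
    constructor
    · intro hh v hv; rw [← h1 h v hv]; exact hh v hv
    · intro hh v hv; rw [h1 h v hv]; exact hh v hv
  · exact h2 h

lemma div_eq_iff_of_pos (hk : 0 < k) {x b : ℕ} : x / k = b ↔ b * k ≤ x ∧ x < (b + 1) * k := by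
  constructor
  · rintro rfl
    refine ⟨Nat.div_mul_le_self x k, ?_⟩
    exact (Nat.div_lt_iff_lt_mul hk).mp (Nat.lt_succ_self _)
  · rintro ⟨h1, h2⟩
    exact Nat.div_eq_of_lt_le h1 h2

/-- The vertices of block `b`. -/
def Vblk (n k : ℕ) (b : ℕ) : Finset (Fin n) := Finset.univ.filter (fun v => v.1 / k = b)

lemma card_Vblk (hk : 0 < k) {m : ℕ} (hn : n = k * m) {b : ℕ} (hb : b < m) :
    (Vblk n k b).card = k := by
  have himg : (Vblk n k b).image Fin.val = (Finset.range n).filter (fun x => x / k = b) := by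
    ext x
    simp only [Vblk, Finset.mem_image, Finset.mem_filter, Finset.mem_univ, true_and,
      Finset.mem_range]
    constructor
    · rintro ⟨v, hv, rfl⟩; exact ⟨v.2, hv⟩
    · rintro ⟨hx, hdiv⟩; exact ⟨⟨x, hx⟩, hdiv, rfl⟩
  have h2 : (Finset.range n).filter (fun x => x / k = b) = Finset.Ico (b * k) (b * k + k) := by
    ext x
    simp only [Finset.mem_filter, Finset.mem_range, Finset.mem_Ico, div_eq_iff_of_pos hk]
    constructor
    · rintro ⟨_, h1, h2⟩; constructor <;> nlinarith
    · rintro ⟨h1, h2⟩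
      refine ⟨?_, h1, by nlinarith⟩
      have : b + 1 ≤ m := hb
      calc x < b * k + k := h2
        _ = (b + 1) * k := by ring
        _ ≤ m * k := Nat.mul_le_mul_right k this
        _ = n := by rw [hn, Nat.mul_comm]
  have := Finset.card_image_of_injective (Vblk n k b) (Fin.val_injective)
  rw [himg, h2] at this
  rw [← this, Nat.card_Ico]
  omega

end Constr

section Block

variable {ι : Type} [Fintype ι] [DecidableEq ι] (ν : ι → Measure Bool)
  [∀ i, IsProbabilityMeasure (ν i)]

lemma pi_single_true (i : ι) : Measure.pi ν {ω | ω i = true} = ν i {true} := by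
  have h : {ω : ι → Bool | ω i = true} = {ω | ∀ j ∈ ({i} : Finset ι), ω j = true} := by
    ext ω; simp
  rw [h, pi_forall_true, Finset.prod_singleton]

lemma pi_pair_true {i j : ι} (hij : i ≠ j) :
    Measure.pi ν {ω | ω i = true ∧ ω j = true} = ν i {true} * ν j {true} := by
  have h : {ω : ι → Bool | ω i = true ∧ ω j = true}
      = {ω | ∀ l ∈ ({i, j} : Finset ι), ω l = true} := by
    ext ω; simp only [Set.mem_setOf_eq, Finset.mem_insert, Finset.mem_singleton]
    constructor
    · rintro ⟨h1, h2⟩ l (rfl | rfl) <;> assumption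
    · intro h; exact ⟨h i (Or.inl rfl), h j (Or.inr rfl)⟩
  rw [h, pi_forall_true, Finset.prod_pair hij]

lemma block_fail (q : ℝ) (hq0 : 0 < q) (hq1 : q < 1) (V : Finset ι)
    (hV : ∀ i ∈ V, ν i {true} = ENNReal.ofReal q) (k : ℕ) (hk : 0 < k) (hcard : V.card = k) :
    Measure.pi ν {ω | ((V.filter fun i => ω i = true).card : ℝ)
        ≤ k * q - Real.sqrt (2 * k * q)}
      ≤ ENNReal.ofReal (Real.exp (-1)) := by
  classical
  set μ := Measure.pi ν with hμ
  set Y : ι → (ι → Bool) → ℝ := fun i ω => if ω i = true then (1:ℝ) else 0 with hYdef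
  set C : (ι → Bool) → ℝ := fun ω => ((V.filter fun i => ω i = true).card : ℝ) with hCdef
  have hCsum : ∀ ω, C ω = ∑ i ∈ V, Y i ω := by
    intro ω
    simp only [hCdef, hYdef, Finset.card_filter]
    push_cast
    rfl
  have hq0' : (0:ℝ) ≤ q := hq0.le
  have hkR : (0:ℝ) < k := Nat.cast_pos.mpr hk
  -- first moments
  have EY : ∀ i ∈ V, ∫ ω, Y i ω ∂μ = q := by
    intro i hi
    have hYi : Y i = Set.indicator {ω : ι → Bool | ω i = true} 1 := by
      funext ω
      by_cases h : ω i = true <;> simp [hYdef, Set.indicator_apply, h]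
    rw [hYi, integral_indicator_one MeasurableSet.of_discrete, measureReal_def, hμ, pi_single_true, hV i hi,
      ENNReal.toReal_ofReal hq0']
  have EYY : ∀ i ∈ V, ∀ j ∈ V, ∫ ω, Y i ω * Y j ω ∂μ = if i = j then q else q * q := by
    intro i hi j hj
    by_cases hij : i = j
    · subst hij
      have : ∀ ω, Y i ω * Y i ω = Y i ω := by
        intro ω; by_cases h : ω i = true <;> simp [hYdef, h]
      rw [if_pos rfl]
      calc ∫ ω, Y i ω * Y i ω ∂μ = ∫ ω, Y i ω ∂μ := by
            exact integral_congr_ae (ae_of_all _ this)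
        _ = q := EY i hi
    · rw [if_neg hij]
      have hYij : (fun ω => Y i ω * Y j ω)
          = Set.indicator {ω : ι → Bool | ω i = true ∧ ω j = true} 1 := by
        funext ω
        by_cases h1 : ω i = true <;> by_cases h2 : ω j = true <;>
          simp [hYdef, Set.indicator_apply, h1, h2]
      rw [hYij, integral_indicator_one MeasurableSet.of_discrete, measureReal_def, hμ, pi_pair_true ν hij,
        hV i hi, hV j hj, ← ENNReal.ofReal_mul hq0', ENNReal.toReal_ofReal (by positivity)]
  have EC : ∫ ω, C ω ∂μ = k * q := by
    calc ∫ ω, C ω ∂μ = ∫ ω, ∑ i ∈ V, Y i ω ∂μ := integral_congr_ae (ae_of_all _ hCsum)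
      _ = ∑ i ∈ V, ∫ ω, Y i ω ∂μ := integral_finset_sum V (fun i _ => .of_finite)
      _ = ∑ _i ∈ V, q := Finset.sum_congr rfl EY
      _ = k * q := by rw [Finset.sum_const, hcard]; simp [mul_comm]
  have EC2 : ∫ ω, (C ω)^2 ∂μ = k * q + ((k:ℝ)^2 - k) * (q*q) := by
    have hsq : ∀ ω, (C ω)^2 = ∑ i ∈ V, ∑ j ∈ V, Y i ω * Y j ω := by
      intro ω
      rw [hCsum, sq, Finset.sum_mul_sum]
    calc ∫ ω, (C ω)^2 ∂μ = ∫ ω, ∑ i ∈ V, ∑ j ∈ V, Y i ω * Y j ω ∂μ :=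
          integral_congr_ae (ae_of_all _ hsq)
      _ = ∑ i ∈ V, ∫ ω, ∑ j ∈ V, Y i ω * Y j ω ∂μ :=
          integral_finset_sum V (fun i _ => .of_finite)
      _ = ∑ i ∈ V, ∑ j ∈ V, ∫ ω, Y i ω * Y j ω ∂μ :=
          Finset.sum_congr rfl fun i _ => integral_finset_sum V (fun j _ => .of_finite)
      _ = ∑ i ∈ V, ∑ j ∈ V, (if i = j then q else q * q) :=
          Finset.sum_congr rfl fun i hi => Finset.sum_congr rfl fun j hj => EYY i hi j hj
      _ = ∑ _i ∈ V, ((k:ℝ) * (q*q) + (q - q*q)) := by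
          refine Finset.sum_congr rfl fun i hi => ?_
          have : ∀ j, (if i = j then q else q*q) = q*q + (if j = i then q - q*q else 0) := by
            intro j
            by_cases h : j = i
            · subst h; simp
            · rw [if_neg h, if_neg (fun hh => h hh.symm), add_zero]
          rw [Finset.sum_congr rfl fun j _ => this j, Finset.sum_add_distrib,
            Finset.sum_const, Finset.sum_ite_eq' V i (fun _ => q - q*q), if_pos hi, hcard]
          simp [mul_comm]
      _ = k * q + ((k:ℝ)^2 - k) * (q*q) := by
          rw [Finset.sum_const, hcard]; simp; ring
  -- Cantelli's inequality
  set t := Real.sqrt (2 * k * q) with htdef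
  have ht : 0 < t := Real.sqrt_pos.mpr (by positivity)
  have ht2 : t^2 = 2 * k * q := Real.sq_sqrt (by positivity)
  set σ2 : ℝ := k * q * (1 - q) with hσdef
  have hσ : 0 < σ2 := by
    have : 0 < 1 - q := by linarith
    positivity
  set u := σ2 / t with hudef
  have hu : 0 < u := div_pos hσ ht
  set c := (k:ℝ) * q + u with hcdef
  have hI : ∫ ω, (c - C ω)^2 ∂μ = u^2 + σ2 := by
    have expand : ∀ ω, (c - C ω)^2 = c^2 - 2*c*(C ω) + (C ω)^2 := fun ω => by ring
    calc ∫ ω, (c - C ω)^2 ∂μ = ∫ ω, (c^2 - 2*c*(C ω) + (C ω)^2) ∂μ :=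
          integral_congr_ae (ae_of_all _ expand)
      _ = (∫ _ω, c^2 ∂μ) - (∫ ω, 2*c*(C ω) ∂μ) + (∫ ω, (C ω)^2 ∂μ) := by
          rw [integral_add (by exact (Integrable.of_finite).sub (Integrable.of_finite))
            (Integrable.of_finite), integral_sub (Integrable.of_finite) (Integrable.of_finite)]
      _ = c^2 - 2*c*(k*q) + (k * q + ((k:ℝ)^2 - k) * (q*q)) := by
          rw [integral_const, integral_const_mul, EC, EC2]
          simp [measure_univ]
      _ = u^2 + σ2 := by rw [hcdef, hσdef]; ring
  have hsub : {ω | C ω ≤ (k:ℝ)*q - t} ⊆ {ω | (u+t)^2 ≤ (c - C ω)^2} := by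
    intro ω hω
    simp only [Set.mem_setOf_eq] at hω ⊢
    have h1 : u + t ≤ c - C ω := by rw [hcdef]; linarith
    nlinarith [hu, ht]
  have markov := mul_meas_ge_le_integral_of_nonneg (μ := μ)
    (f := fun ω => (c - C ω)^2) (ae_of_all _ fun ω => sq_nonneg _) (Integrable.of_finite)
    ((u+t)^2)
  rw [hI] at markov
  have hmono : μ {ω | C ω ≤ (k:ℝ)*q - t} ≤ μ {x | (u+t)^2 ≤ (c - C x)^2} :=
    measure_mono hsub
  have hne : μ {ω | C ω ≤ (k:ℝ)*q - t} ≠ ⊤ := measure_ne_top _ _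
  have h3 : (μ {ω | C ω ≤ (k:ℝ)*q - t}).toReal ≤ (μ {x | (u+t)^2 ≤ (c - C x)^2}).toReal :=
    ENNReal.toReal_mono (measure_ne_top _ _) hmono
  have h4 : (0:ℝ) < (u+t)^2 := by positivity
  have key : (μ {ω | C ω ≤ (k:ℝ)*q - t}).toReal ≤ (u^2 + σ2)/((u+t)^2) := by
    rw [le_div_iff₀ h4]
    calc (μ {ω | C ω ≤ (k:ℝ)*q - t}).toReal * (u+t)^2
        ≤ (μ {x | (u+t)^2 ≤ (c - C x)^2}).toReal * (u+t)^2 := by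
          exact mul_le_mul_of_nonneg_right h3 h4.le
      _ ≤ u^2 + σ2 := by rw [measureReal_def] at markov; linarith [markov]
  have hval : (u^2 + σ2)/((u+t)^2) = σ2/(σ2 + t^2) := by
    rw [hudef]
    have h5 : σ2 + t^2 ≠ 0 := by positivity
    field_simp
  have hle13 : σ2/(σ2 + t^2) ≤ 1/3 := by
    rw [ht2, div_le_div_iff₀ (by positivity) (by norm_num)]
    rw [hσdef]
    nlinarith [mul_pos hkR hq0]
  have h13e : (1:ℝ)/3 ≤ Real.exp (-1) := by
    rw [Real.exp_neg]
    have h6 : Real.exp 1 ≤ 3 := by linarith [Real.exp_one_lt_d9]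
    rw [one_div]
    exact inv_anti₀ (Real.exp_pos 1) h6
  have hfinal : (μ {ω | C ω ≤ (k:ℝ)*q - t}).toReal ≤ Real.exp (-1) := by
    calc (μ {ω | C ω ≤ (k:ℝ)*q - t}).toReal ≤ (u^2 + σ2)/((u+t)^2) := key
      _ = σ2/(σ2 + t^2) := hval
      _ ≤ 1/3 := hle13
      _ ≤ Real.exp (-1) := h13e
  calc μ {ω | C ω ≤ (k:ℝ)*q - t} = ENNReal.ofReal ((μ {ω | C ω ≤ (k:ℝ)*q - t}).toReal) :=
        (ENNReal.ofReal_toReal hne).symm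
    _ ≤ ENNReal.ofReal (Real.exp (-1)) := ENNReal.ofReal_le_ofReal hfinal

end Block

section Product

variable {ι : Type} [Fintype ι] [DecidableEq ι] (ν : ι → Measure Bool)
  [∀ i, IsProbabilityMeasure (ν i)]

lemma meas_biInter_eq_prod {m : ℕ} (F : Fin m → Set (ι → Bool)) (Vs : Fin m → Finset ι)
    (hdet : ∀ b (ω ω' : ι → Bool), (∀ i ∈ Vs b, ω i = ω' i) → (ω ∈ F b ↔ ω' ∈ F b))
    (hdisj : ∀ b b', b ≠ b' → Disjoint (Vs b) (Vs b')) (s : Finset (Fin m)) :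
    Measure.pi ν (⋂ b ∈ s, F b) = ∏ b ∈ s, Measure.pi ν (F b) := by
  classical
  induction s using Finset.induction_on with
  | empty => simp
  | @insert j s hj ih =>
    rw [Finset.set_biInter_insert, Finset.prod_insert hj, ← ih]
    set A : (ι → Bool) → Bool := fun ω => decide (ω ∈ F j) with hAdef
    set B : (ι → Bool) → Bool := fun ω => decide (ω ∈ ⋂ b ∈ s, F b) with hBdef
    have hdisj' : Disjoint (Vs j) (s.biUnion Vs) := by
      rw [Finset.disjoint_biUnion_right]
      intro b hb
      exact hdisj j b (fun h => hj (h ▸ hb))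
    have hA : ∀ ω ω' : ι → Bool, (∀ i ∈ Vs j, ω i = ω' i) → A ω = A ω' := by
      intro ω ω' h
      exact decide_eq_decide.mpr (hdet j ω ω' h)
    have hB : ∀ ω ω' : ι → Bool, (∀ i ∈ s.biUnion Vs, ω i = ω' i) → B ω = B ω' := by
      intro ω ω' h
      refine decide_eq_decide.mpr ?_
      simp only [Set.mem_iInter]
      constructor
      · intro hh b hb
        exact (hdet b ω ω' (fun i hi => h i (Finset.mem_biUnion.mpr ⟨b, hb, hi⟩))).mp (hh b hb)
      · intro hh b hb
        exact (hdet b ω ω' (fun i hi => h i (Finset.mem_biUnion.mpr ⟨b, hb, hi⟩))).mpr (hh b hb)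
    have hindep := indep_of_determined ν (Vs j) (s.biUnion Vs) hdisj' A B hA hB
    have hkey := hindep.measure_inter_preimage_eq_mul (s := {true}) (t := {true})
      MeasurableSet.of_discrete MeasurableSet.of_discrete
    have hApre : A ⁻¹' {true} = F j := by
      ext ω; simp [hAdef]
    have hBpre : B ⁻¹' {true} = ⋂ b ∈ s, F b := by
      ext ω; simp [hBdef]
    rw [hApre, hBpre] at hkey
    exact hkey

end Product

end LCC

open LCC in
theorem large_clique_construction_one :
    ∀ p : ℝ, 0 < p → p < 1 →
      ∀ n d : ℕ, 0 < n → 0 < d → 2 ∣ d → d / 2 ∣ n →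
        ∃ G : DepGraph n p d,
          ENNReal.ofReal (1 - Real.exp (-(2 * (n : ℝ) / (d : ℝ)))) ≤
            G.μ {ω | ∃ s : Finset (Fin n), (G.graph ω).IsClique ↑s ∧
              (d : ℝ) * Real.sqrt p / 2 - Real.sqrt ((d : ℝ) * Real.sqrt p) <
                (s.card : ℝ)} := by
  classical
  intro p hp0 hp1 n d hn hd hd2 hdvd
  obtain ⟨k, hdk⟩ := hd2
  have hk2 : d / 2 = k := by omega
  have hk : 0 < k := by omega
  rw [hk2] at hdvd
  obtain ⟨m, hm⟩ := hdvd
  have hm0 : 0 < m := by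
    rcases Nat.eq_zero_or_pos m with h | h
    · subst h; simp at hm; omega
    · exact h
  set q := Real.sqrt p with hqdef
  have hq0 : 0 < q := Real.sqrt_pos.mpr hp0
  have hq1 : q < 1 := by
    rw [hqdef, show (1:ℝ) = Real.sqrt 1 by simp]
    exact Real.sqrt_lt_sqrt hp0.le hp1
  have hqq : q * q = p := Real.mul_self_sqrt hp0.le
  set ι : Type := (Fin n) ⊕ (Sym2 (Fin n)) with hιdef
  set ν : ι → Measure Bool := Sum.elim (fun _ => LCC.bern q) (fun _ => LCC.bern p) with hνdef
  haveI hprob : ∀ i, IsProbabilityMeasure (ν i) := by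
    rintro (v | e)
    · exact LCC.bern_prob hq0.le hq1.le
    · exact LCC.bern_prob hp0.le hp1.le
  have hνl : ∀ v : Fin n, ν (Sum.inl v) {true} = ENNReal.ofReal q := fun v => LCC.bern_true q
  have hνr : ∀ e : Sym2 (Fin n), ν (Sum.inr e) {true} = ENNReal.ofReal p :=
    fun e => LCC.bern_true p
  -- edge probabilities
  have hedge : ∀ e : Sym2 (Fin n), ¬ e.IsDiag →
      Measure.pi ν {ω | LCC.XX k e ω = true} = ENNReal.ofReal p := by
    intro e he
    induction e using Sym2.ind with
    | _ a b =>
      have hab : a ≠ b := fun h => he (by simp [h])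
      by_cases hsb : blkEq k s(a, b)
      · have hset : {ω : ι → Bool | LCC.XX k s(a, b) ω = true}
            = {ω | ∀ i ∈ ({Sum.inl a, Sum.inl b} : Finset ι), ω i = true} := by
          ext ω
          simp only [Set.mem_setOf_eq, LCC.XX, if_pos hsb, decide_eq_true_eq,
            Finset.mem_insert, Finset.mem_singleton]
          constructor
          · intro h i hi
            rcases hi with rfl | rfl
            · exact h a (by simp)
            · exact h b (by simp)
          · intro h v hv
            rw [Sym2.mem_iff] at hv
            rcases hv with rfl | rfl
            · exact h _ (Or.inl rfl)
            · exact h _ (Or.inr rfl)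
        rw [hset, LCC.pi_forall_true,
          Finset.prod_pair (fun h => hab (Sum.inl_injective h)), hνl, hνl,
          ← ENNReal.ofReal_mul hq0.le, hqq]
      · have hset : {ω : ι → Bool | LCC.XX k s(a, b) ω = true}
            = {ω | ω (Sum.inr s(a, b)) = true} := by
          ext ω
          simp [LCC.XX, if_neg hsb]
        rw [hset, LCC.pi_single_true, hνr]
  -- local dependence
  have hloc : ∀ e : Sym2 (Fin n), ¬ e.IsDiag →
      ∃ N : Finset (Sym2 (Fin n)), e ∉ N ∧ N.card ≤ d ∧
        IndepFun (LCC.XX k e)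
          (fun (ω : ι → Bool) (f : {f : Sym2 (Fin n) // ¬ f.IsDiag ∧ f ∉ N ∧ f ≠ e}) =>
            LCC.XX k f.1 ω) (Measure.pi ν) := by
    intro e he
    induction e using Sym2.ind with
    | _ a b =>
      have hab : a ≠ b := fun h => he (by simp [h])
      by_cases hsb : blkEq k s(a, b)
      · -- in-block edge
        set N : Finset (Sym2 (Fin n)) :=
          Finset.univ.filter (fun f => f ≠ s(a, b) ∧ (a ∈ f ∨ b ∈ f) ∧ blkEq k f) with hNdef
        have hmemN : ∀ f, f ∈ N ↔ (f ≠ s(a, b) ∧ (a ∈ f ∨ b ∈ f) ∧ blkEq k f) := by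
          intro f; simp [hNdef]
        refine ⟨N, ?_, ?_, ?_⟩
        · intro h; exact ((hmemN _).mp h).1 rfl
        · -- cardinality bound
          have hsubN : N ⊆ ((Vblk n k (a.1 / k)).image (fun w => s(a, w)))
              ∪ ((Vblk n k (b.1 / k)).image (fun w => s(b, w))) := by
            intro f hf
            obtain ⟨hne, hmem, hblk⟩ := (hmemN f).mp hf
            rcases hmem with ha | hb
            · obtain ⟨w, rfl⟩ := Sym2.mem_iff_exists.mp ha
              refine Finset.mem_union_left _ (Finset.mem_image.mpr ⟨w, ?_, rfl⟩)
              simp only [Vblk, Finset.mem_filter, Finset.mem_univ, true_and]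
              exact hblk w (by simp) a (by simp)
            · obtain ⟨w, rfl⟩ := Sym2.mem_iff_exists.mp hb
              refine Finset.mem_union_right _ (Finset.mem_image.mpr ⟨w, ?_, rfl⟩)
              simp only [Vblk, Finset.mem_filter, Finset.mem_univ, true_and]
              exact hblk w (by simp) b (by simp)
          have hda : a.1 / k < m := by
            rw [Nat.div_lt_iff_lt_mul hk]
            calc a.1 < n := a.2
              _ = m * k := by rw [hm, Nat.mul_comm]
          have hdb : b.1 / k < m := by
            rw [Nat.div_lt_iff_lt_mul hk]
            calc b.1 < n := b.2
              _ = m * k := by rw [hm, Nat.mul_comm]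
          calc N.card ≤ (((Vblk n k (a.1 / k)).image (fun w => s(a, w)))
                ∪ ((Vblk n k (b.1 / k)).image (fun w => s(b, w)))).card :=
              Finset.card_le_card hsubN
            _ ≤ ((Vblk n k (a.1 / k)).image (fun w => s(a, w))).card
                + ((Vblk n k (b.1 / k)).image (fun w => s(b, w))).card :=
              Finset.card_union_le _ _
            _ ≤ (Vblk n k (a.1 / k)).card + (Vblk n k (b.1 / k)).card :=
              Nat.add_le_add (Finset.card_image_le) (Finset.card_image_le)
            _ = k + k := by rw [card_Vblk hk hm hda, card_Vblk hk hm hdb]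
            _ ≤ d := by omega
        · -- independence
          refine LCC.indep_of_determined ν ({Sum.inl a, Sum.inl b} : Finset ι)
            (({Sum.inl a, Sum.inl b} : Finset ι))ᶜ disjoint_compl_right _ _ ?_ ?_
          · intro ω ω' h
            refine XX_det _ _ _ (fun _ v hv => ?_) (fun hc => absurd hsb hc)
            rw [Sym2.mem_iff] at hv
            rcases hv with rfl | rfl
            · exact h _ (by simp)
            · exact h _ (by simp)
          · intro ω ω' h
            funext f
            obtain ⟨f, hfd, hfN, hfe⟩ := f
            refine XX_det _ _ _ (fun hblkf v hv => ?_) (fun _ => ?_)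
            · refine h _ (Finset.mem_compl.mpr ?_)
              intro hmem
              simp only [Finset.mem_insert, Finset.mem_singleton] at hmem
              apply hfN
              refine (hmemN f).mpr ⟨hfe, ?_, hblkf⟩
              rcases hmem with h' | h'
              · left; rw [← Sum.inl_injective h']; exact hv
              · right; rw [← Sum.inl_injective h']; exact hv
            · refine h _ (Finset.mem_compl.mpr ?_)
              simp
      · -- cross-block edge
        refine ⟨∅, Finset.notMem_empty _, by simp, ?_⟩
        refine LCC.indep_of_determined ν ({Sum.inr s(a, b)} : Finset ι)
          (({Sum.inr s(a, b)} : Finset ι))ᶜ disjoint_compl_right _ _ ?_ ?_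
        · intro ω ω' h
          refine XX_det _ _ _ (fun hc => absurd hc hsb) (fun _ => h _ (by simp))
        · intro ω ω' h
          funext f
          obtain ⟨f, hfd, hfN, hfe⟩ := f
          refine XX_det _ _ _ (fun _ v hv => ?_) (fun _ => ?_)
          · exact h _ (Finset.mem_compl.mpr (by simp))
          · refine h _ (Finset.mem_compl.mpr ?_)
            simp only [Finset.mem_singleton]
            intro hc
            exact hfe (Sum.inr_injective hc)

  -- the graph distribution
-- final part
  set G : DepGraph n p d :=
    ⟨ι → Bool, Measure.pi ν, LCC.XX k, fun e => Measurable.of_discrete, hedge, hloc⟩ with hGdef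
  refine ⟨G, ?_⟩
  set θ : ℝ := k * q - Real.sqrt (2 * k * q) with hθdef
  have hdR : (d:ℝ) = 2 * k := by rw [hdk]; push_cast; ring
  have hθeq : (d : ℝ) * Real.sqrt p / 2 - Real.sqrt ((d : ℝ) * Real.sqrt p) = θ := by
    rw [hθdef, hdR, ← hqdef]
    have h2 : (2:ℝ) * (k:ℝ) * q / 2 = k * q := by ring
    have h3 : (2:ℝ) * (k:ℝ) * q = 2 * ((k:ℝ) * q) := by ring
    rw [h2]
  set Vs : Fin m → Finset ι := fun b => (Vblk n k b.1).image Sum.inl with hVsdef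
  set F : Fin m → Set (ι → Bool) :=
    fun b => {ω | (((Vs b).filter fun i => ω i = true).card : ℝ)
      ≤ k * q - Real.sqrt (2 * k * q)} with hFdef
  have hVscard : ∀ b : Fin m, (Vs b).card = k := by
    intro b
    rw [hVsdef]
    simp only
    rw [Finset.card_image_of_injective _ Sum.inl_injective, card_Vblk hk hm b.2]
  have hVsq : ∀ b : Fin m, ∀ i ∈ Vs b, ν i {true} = ENNReal.ofReal q := by
    intro b i hi
    obtain ⟨v, _, rfl⟩ := Finset.mem_image.mp hi
    exact hνl v
  have hfail : ∀ b, Measure.pi ν (F b) ≤ ENNReal.ofReal (Real.exp (-1)) :=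
    fun b => LCC.block_fail ν q hq0 hq1 (Vs b) (hVsq b) k hk (hVscard b)
  have hdet : ∀ b (ω ω' : ι → Bool), (∀ i ∈ Vs b, ω i = ω' i) → (ω ∈ F b ↔ ω' ∈ F b) := by
    intro b ω ω' h
    have heq : (Vs b).filter (fun i => ω i = true) = (Vs b).filter (fun i => ω' i = true) :=
      Finset.filter_congr (fun i hi => by rw [h i hi])
    simp only [hFdef, Set.mem_setOf_eq, heq]
  have hdisj : ∀ b b' : Fin m, b ≠ b' → Disjoint (Vs b) (Vs b') := by
    intro b b' hbb
    rw [hVsdef]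
    simp only
    rw [Finset.disjoint_image Sum.inl_injective, Finset.disjoint_left]
    intro v hv hv'
    simp only [Vblk, Finset.mem_filter, Finset.mem_univ, true_and] at hv hv'
    exact hbb (Fin.ext (hv ▸ hv'))
  have hprodle : Measure.pi ν (⋂ b ∈ Finset.univ, F b)
      ≤ ENNReal.ofReal (Real.exp (-(m:ℝ))) := by
    rw [LCC.meas_biInter_eq_prod ν F Vs hdet hdisj Finset.univ]
    calc ∏ b ∈ Finset.univ, Measure.pi ν (F b)
        ≤ ∏ _b ∈ (Finset.univ : Finset (Fin m)), ENNReal.ofReal (Real.exp (-1)) :=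
          Finset.prod_le_prod' (fun b _ => hfail b)
      _ = ENNReal.ofReal (Real.exp (-1)) ^ m := by
          rw [Finset.prod_const, Finset.card_univ, Fintype.card_fin]
      _ = ENNReal.ofReal (Real.exp (-1) ^ m) :=
          (ENNReal.ofReal_pow (Real.exp_nonneg _) m).symm
      _ = ENNReal.ofReal (Real.exp (-(m:ℝ))) := by
          rw [← Real.exp_nat_mul]
          congr 1
          ring
  have hincl : (⋂ b ∈ Finset.univ, F b)ᶜ
      ⊆ {ω : ι → Bool | ∃ s : Finset (Fin n), (G.graph ω).IsClique ↑s ∧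
          (d : ℝ) * Real.sqrt p / 2 - Real.sqrt ((d : ℝ) * Real.sqrt p) < (s.card : ℝ)} := by
    intro ω hω
    simp only [Set.mem_compl_iff, Set.mem_iInter, not_forall] at hω
    obtain ⟨b, -, hb⟩ := hω
    rw [hFdef] at hb
    simp only [Set.mem_setOf_eq, not_le] at hb
    set sV : Finset (Fin n) := (Vblk n k b.1).filter (fun v => ω (Sum.inl v) = true) with hsVdef
    have hcards : ((Vs b).filter fun i => ω i = true).card = sV.card := by
      rw [hVsdef]
      simp only
      rw [Finset.filter_image, Finset.card_image_of_injective _ Sum.inl_injective]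
    have hblkmem : ∀ v ∈ sV, v.1 / k = b.1 ∧ ω (Sum.inl v) = true := by
      intro v hv
      simp only [hsVdef, Vblk, Finset.mem_filter, Finset.mem_univ, true_and] at hv
      exact hv
    refine ⟨sV, ?_, ?_⟩
    · intro u hu v hv huv
      have hu' := hblkmem u (Finset.mem_coe.mp hu)
      have hv' := hblkmem v (Finset.mem_coe.mp hv)
      refine (show u ≠ v ∧ LCC.XX k s(u, v) ω = true from ⟨huv, ?_⟩)
      show LCC.XX k s(u, v) ω = true
      have hblk : blkEq k s(u, v) := blkEq_mk.mpr (by rw [hu'.1, hv'.1])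
      rw [LCC.XX, if_pos hblk, decide_eq_true_eq]
      intro w hw
      rw [Sym2.mem_iff] at hw
      rcases hw with rfl | rfl
      · exact hu'.2
      · exact hv'.2
    · rw [hθeq]
      rw [hcards] at hb
      exact hb
  have hmeasI : MeasurableSet (⋂ b ∈ Finset.univ, F b) := .of_discrete
  have harg : -(2 * (n:ℝ) / (d:ℝ)) = -(m:ℝ) := by
    have hnR : (n:ℝ) = k * m := by rw [hm]; push_cast; ring
    have hkne : (k:ℝ) ≠ 0 := Nat.cast_ne_zero.mpr hk.ne'
    rw [hnR, hdR]
    field_simp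
  calc ENNReal.ofReal (1 - Real.exp (-(2 * (n:ℝ) / (d:ℝ))))
      = ENNReal.ofReal (1 - Real.exp (-(m:ℝ))) := by rw [harg]
    _ = 1 - ENNReal.ofReal (Real.exp (-(m:ℝ))) := by
        rw [ENNReal.ofReal_sub _ (Real.exp_nonneg _), ENNReal.ofReal_one]
    _ ≤ 1 - Measure.pi ν (⋂ b ∈ Finset.univ, F b) := tsub_le_tsub_left hprodle 1
    _ = Measure.pi ν ((⋂ b ∈ Finset.univ, F b)ᶜ) := (prob_compl_eq_one_sub hmeasI).symm
    _ ≤ _ := measure_mono hincl
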